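/- The pair (c_0, ℓ_p), 1 ≤ p < ∞, fails the weak minimizing property. Specifically, let x*_j = 2^{-j} e*_j − Σ_{i>j} 2^{-i} e*_i ∈ ℓ_1 and T = Σ_i x*_i ⊗ f_i ∈ L(c_0, ℓ_p). Then ‖T(Σ_{k=1}^m e_k)‖ = m^{1/p}/2^m, so m(T)=0 and (Σ_{k=1}^n e_k)_n is a non-weakly null minimizing sequence, but no x ∈ S_{c_0} satisfies Tx = 0, so T does not attain its minimum modulus. -/

import Mathlib

open Filter Topology

noncomputable def minMod {X Y : Type*} [NormedAddCommGroup X] [NormedSpace ℝ X]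
    [NormedAddCommGroup Y] [NormedSpace ℝ Y] (T : X →L[ℝ] Y) : ℝ :=
  sInf {r : ℝ | ∃ x : X, ‖x‖ = 1 ∧ ‖T x‖ = r}

def WeaklyNull {X : Type*} [NormedAddCommGroup X] [NormedSpace ℝ X] (x : ℕ → X) : Prop :=
  ∀ f : X →L[ℝ] ℝ, Tendsto (fun n => f (x n)) atTop (𝓝 0)

def AttainsMinMod {X Y : Type*} [NormedAddCommGroup X] [NormedSpace ℝ X]
    [NormedAddCommGroup Y] [NormedSpace ℝ Y] (T : X →L[ℝ] Y) : Prop :=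
  ∃ x : X, ‖x‖ = 1 ∧ ‖T x‖ = minMod T

def PairPropM (X Y : Type*) [NormedAddCommGroup X] [NormedSpace ℝ X]
    [NormedAddCommGroup Y] [NormedSpace ℝ Y] : Prop :=
  ∀ T : X →L[ℝ] Y, 1 ≤ minMod T →
    ∀ (x : X) (y : Y), ‖x‖ ≤ ‖y‖ → ∀ xs : ℕ → X, WeaklyNull xs →
      limsup (fun n => ‖x + xs n‖) atTop ≤ limsup (fun n => ‖y + T (xs n)‖) atTop

def PairPropO (X Y : Type*) [NormedAddCommGroup X] [NormedSpace ℝ X]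
    [NormedAddCommGroup Y] [NormedSpace ℝ Y] : Prop :=
  ∀ T : X →L[ℝ] Y, 1 ≤ minMod T →
    ∀ y : Y, y ≠ 0 → ∀ xs : ℕ → X, WeaklyNull xs →
      limsup (fun n => ‖xs n‖) atTop < limsup (fun n => ‖y + T (xs n)‖) atTop

def PropertyM (X : Type*) [NormedAddCommGroup X] [NormedSpace ℝ X] : Prop :=
  ∀ x y : X, ‖y‖ ≤ ‖x‖ → ∀ xs : ℕ → X, WeaklyNull xs →
    limsup (fun n => ‖y + xs n‖) atTop ≤ limsup (fun n => ‖x + xs n‖) atTop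

def OpialProperty (X : Type*) [NormedAddCommGroup X] [NormedSpace ℝ X] : Prop :=
  ∀ x : X, x ≠ 0 → ∀ xs : ℕ → X, WeaklyNull xs →
    limsup (fun n => ‖xs n‖) atTop < limsup (fun n => ‖x + xs n‖) atTop

def WeakMinimizingProperty (X Y : Type*) [NormedAddCommGroup X] [NormedSpace ℝ X]
    [NormedAddCommGroup Y] [NormedSpace ℝ Y] : Prop :=
  ∀ T : X →L[ℝ] Y,
    (∃ xs : ℕ → X, (∀ n, ‖xs n‖ = 1) ∧
      Tendsto (fun n => ‖T (xs n)‖) atTop (𝓝 (minMod T)) ∧ ¬ WeaklyNull xs) →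
    AttainsMinMod T

open scoped ENNReal ZeroAtInfty
set_option maxHeartbeats 1000000

namespace Stmt13Aux

open Filter Topology
open scoped ENNReal ZeroAtInfty

noncomputable def Tfun (x : C₀(ℕ, ℝ)) (j : ℕ) : ℝ :=
  (1/2:ℝ)^(j+1) * x j - ∑' i : ℕ, if j < i then (1/2:ℝ)^(i+1) * x i else 0

lemma abs_apply_le (x : C₀(ℕ, ℝ)) (i : ℕ) : |x i| ≤ ‖x‖ := by
  have h1 := x.toBCF.norm_coe_le_norm i
  rw [ZeroAtInftyContinuousMap.norm_toBCF_eq_norm] at h1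
  simpa [Real.norm_eq_abs] using h1

lemma summable_geo : Summable (fun i : ℕ => (1/2:ℝ)^(i+1)) := by
  have := summable_geometric_two.mul_right (1/2)
  exact this.congr fun i => (pow_succ (1/2:ℝ) i).symm

lemma summable_aux (x : C₀(ℕ, ℝ)) (j : ℕ) :
    Summable (fun i : ℕ => if j < i then (1/2:ℝ)^(i+1) * x i else 0) := by
  apply Summable.of_norm_bounded (g := fun i => ‖x‖ * (1/2:ℝ)^(i+1)) (summable_geo.mul_left ‖x‖)
  intro i
  by_cases h : j < i
  · simp only [if_pos h, Real.norm_eq_abs, abs_mul, abs_pow]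
    rw [abs_of_nonneg (by norm_num : (0:ℝ) ≤ 1/2)]
    calc (1/2:ℝ)^(i+1) * |x i| ≤ (1/2:ℝ)^(i+1) * ‖x‖ := by
          exact mul_le_mul_of_nonneg_left (abs_apply_le x i) (by positivity)
      _ = ‖x‖ * (1/2:ℝ)^(i+1) := mul_comm _ _
  · simp [h, mul_nonneg (norm_nonneg x) (by positivity : (0:ℝ) ≤ (1/2:ℝ)^(i+1))]

lemma tail_geom (j : ℕ) :
    ∑' i : ℕ, (if j < i then (1/2:ℝ)^(i+1) else 0) = (1/2:ℝ)^(j+1) := by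
  have hinj : Function.Injective (fun k : ℕ => k + (j+1)) := fun a b h => by simpa using h
  have hsupp : Function.support (fun i : ℕ => if j < i then (1/2:ℝ)^(i+1) else 0)
      ⊆ Set.range (fun k : ℕ => k + (j+1)) := by
    intro i hi
    by_cases h : j < i
    · exact ⟨i - (j+1), by simp; omega⟩
    · simp [Function.mem_support, h] at hi
  rw [← hinj.tsum_eq hsupp]
  have h1 : ∀ k : ℕ, (if j < k + (j+1) then (1/2:ℝ)^((k+(j+1))+1) else 0)
      = (1/2:ℝ)^(j+2) * (1/2:ℝ)^k := by
    intro k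
    rw [if_pos (by omega), show k+(j+1)+1 = (j+2)+k by omega, pow_add]
  calc ∑' k : ℕ, (if j < k + (j+1) then (1/2:ℝ)^((k+(j+1))+1) else 0)
      = ∑' k : ℕ, (1/2:ℝ)^(j+2) * (1/2:ℝ)^k := tsum_congr h1
    _ = (1/2:ℝ)^(j+2) * 2 := by rw [tsum_mul_left, tsum_geometric_two]
    _ = (1/2:ℝ)^(j+1) := by rw [pow_succ]; ring

lemma summable_ite_geo (j : ℕ) :
    Summable (fun i : ℕ => if j < i then (1/2:ℝ)^(i+1) else 0) := by
  apply Summable.of_nonneg_of_le (f := fun i : ℕ => (1/2:ℝ)^(i+1)) ?_ ?_ summable_geo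
  · intro i; split <;> positivity
  · intro i; split
    · exact le_refl _
    · positivity

lemma tail_abs_le (x : C₀(ℕ, ℝ)) (j : ℕ) :
    |∑' i : ℕ, (if j < i then (1/2:ℝ)^(i+1) * x i else 0)| ≤ ‖x‖ * (1/2:ℝ)^(j+1) := by
  have hb : ∀ i : ℕ, ‖(if j < i then (1/2:ℝ)^(i+1) * x i else 0)‖
      ≤ ‖x‖ * (if j < i then (1/2:ℝ)^(i+1) else 0) := by
    intro i
    by_cases h : j < i
    · simp only [if_pos h, Real.norm_eq_abs, abs_mul, abs_pow]
      rw [abs_of_nonneg (by norm_num : (0:ℝ) ≤ 1/2), mul_comm ‖x‖]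
      exact mul_le_mul_of_nonneg_left (abs_apply_le x i) (by positivity)
    · simp [h]
  have hn : Summable (fun i : ℕ => ‖(if j < i then (1/2:ℝ)^(i+1) * x i else 0)‖) := by
    simpa [Real.norm_eq_abs] using (summable_aux x j).abs
  calc |∑' i : ℕ, (if j < i then (1/2:ℝ)^(i+1) * x i else 0)|
      ≤ ∑' i : ℕ, ‖(if j < i then (1/2:ℝ)^(i+1) * x i else 0)‖ := by
        simpa [Real.norm_eq_abs] using norm_tsum_le_tsum_norm hn
    _ ≤ ∑' i : ℕ, ‖x‖ * (if j < i then (1/2:ℝ)^(i+1) else 0) :=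
        Summable.tsum_le_tsum hb hn ((summable_ite_geo j).mul_left ‖x‖)
    _ = ‖x‖ * (1/2:ℝ)^(j+1) := by rw [tsum_mul_left, tail_geom]

lemma Tfun_abs_le (x : C₀(ℕ, ℝ)) (j : ℕ) : |Tfun x j| ≤ ‖x‖ * (1/2:ℝ)^j := by
  unfold Tfun
  calc |(1/2:ℝ)^(j+1) * x j - ∑' i : ℕ, if j < i then (1/2:ℝ)^(i+1) * x i else 0|
      ≤ |(1/2:ℝ)^(j+1) * x j| + |∑' i : ℕ, if j < i then (1/2:ℝ)^(i+1) * x i else 0| :=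
        abs_sub _ _
    _ ≤ (1/2:ℝ)^(j+1) * ‖x‖ + ‖x‖ * (1/2:ℝ)^(j+1) := by
        refine add_le_add ?_ (tail_abs_le x j)
        rw [abs_mul, abs_pow, abs_of_nonneg (by norm_num : (0:ℝ) ≤ 1/2)]
        exact mul_le_mul_of_nonneg_left (abs_apply_le x j) (by positivity)
    _ = ‖x‖ * (1/2:ℝ)^j := by rw [pow_succ]; ring

section
variable (p : ℝ≥0∞) [Fact (1 ≤ p)]

lemma toReal_pos' (hp : p ≠ ⊤) : 0 < p.toReal :=
  ENNReal.toReal_pos ((zero_lt_one.trans_le (Fact.out : (1:ℝ≥0∞) ≤ p)).ne') hp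

lemma one_le_toReal' (hp : p ≠ ⊤) : 1 ≤ p.toReal := by
  have := ENNReal.toReal_mono hp (Fact.out : (1:ℝ≥0∞) ≤ p)
  simpa using this

lemma pow_rpow_swap (q : ℝ) (j : ℕ) : ((1/2:ℝ)^j)^q = ((1/2:ℝ)^q)^j := by
  rw [← Real.rpow_natCast (1/2:ℝ) j, ← Real.rpow_mul (by norm_num), mul_comm,
    Real.rpow_mul (by norm_num), Real.rpow_natCast]

lemma summable_rpow_geo (hp : p ≠ ⊤) : Summable (fun j : ℕ => ((1/2:ℝ)^p.toReal)^j) :=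
  summable_geometric_of_lt_one (Real.rpow_nonneg (by norm_num) _)
    (Real.rpow_lt_one (by norm_num) (by norm_num) (toReal_pos' p hp))

lemma Tfun_summable_rpow (hp : p ≠ ⊤) (x : C₀(ℕ, ℝ)) :
    Summable (fun j : ℕ => ‖Tfun x j‖ ^ p.toReal) := by
  apply Summable.of_nonneg_of_le
    (f := fun j : ℕ => ‖x‖^p.toReal * ((1/2:ℝ)^p.toReal)^j)
    (fun j => Real.rpow_nonneg (norm_nonneg _) _) ?_
    ((summable_rpow_geo p hp).mul_left _)
  intro j
  calc ‖Tfun x j‖ ^ p.toReal ≤ (‖x‖ * (1/2:ℝ)^j) ^ p.toReal := by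
        apply Real.rpow_le_rpow (norm_nonneg _) ?_ (toReal_pos' p hp).le
        simpa [Real.norm_eq_abs] using Tfun_abs_le x j
    _ = ‖x‖^p.toReal * ((1/2:ℝ)^p.toReal)^j := by
        rw [Real.mul_rpow (norm_nonneg _) (by positivity), pow_rpow_swap]

lemma Tfun_memℓp (hp : p ≠ ⊤) (x : C₀(ℕ, ℝ)) : Memℓp (Tfun x) p :=
  memℓp_gen (by simpa [Real.norm_eq_abs] using Tfun_summable_rpow p hp x)

lemma Tfun_tsum_le (hp : p ≠ ⊤) (x : C₀(ℕ, ℝ)) :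
    ∑' j : ℕ, ‖Tfun x j‖ ^ p.toReal ≤ (2 * ‖x‖) ^ p.toReal := by
  have h2 : (2:ℝ) ≤ (2:ℝ) ^ p.toReal := by
    calc (2:ℝ) = 2 ^ (1:ℝ) := (Real.rpow_one 2).symm
    _ ≤ 2 ^ p.toReal := Real.rpow_le_rpow_of_exponent_le (by norm_num) (one_le_toReal' p hp)
  calc ∑' j : ℕ, ‖Tfun x j‖ ^ p.toReal
      ≤ ∑' j : ℕ, ‖x‖^p.toReal * ((1/2:ℝ)^p.toReal)^j := by
        refine Summable.tsum_le_tsum ?_ (Tfun_summable_rpow p hp x) ((summable_rpow_geo p hp).mul_left _)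
        intro j
        calc ‖Tfun x j‖ ^ p.toReal ≤ (‖x‖ * (1/2:ℝ)^j) ^ p.toReal := by
              apply Real.rpow_le_rpow (norm_nonneg _) ?_ (toReal_pos' p hp).le
              simpa [Real.norm_eq_abs] using Tfun_abs_le x j
          _ = ‖x‖^p.toReal * ((1/2:ℝ)^p.toReal)^j := by
              rw [Real.mul_rpow (norm_nonneg _) (by positivity), pow_rpow_swap]
    _ = ‖x‖^p.toReal * ∑' j : ℕ, ((1/2:ℝ)^p.toReal)^j := tsum_mul_left
    _ ≤ ‖x‖^p.toReal * 2 := by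
        refine mul_le_mul_of_nonneg_left ?_ (Real.rpow_nonneg (norm_nonneg _) _)
        have hle : ∀ j : ℕ, ((1/2:ℝ)^p.toReal)^j ≤ (1/2:ℝ)^j := by
          intro j
          apply pow_le_pow_left₀ (Real.rpow_nonneg (by norm_num) _)
          calc (1/2:ℝ)^p.toReal ≤ (1/2:ℝ)^(1:ℝ) :=
                Real.rpow_le_rpow_of_exponent_ge (by norm_num) (by norm_num) (one_le_toReal' p hp)
            _ = 1/2 := Real.rpow_one _
        calc ∑' j : ℕ, ((1/2:ℝ)^p.toReal)^j ≤ ∑' j : ℕ, (1/2:ℝ)^j :=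
              Summable.tsum_le_tsum hle (summable_rpow_geo p hp) summable_geometric_two
          _ = 2 := tsum_geometric_two
    _ ≤ (2 * ‖x‖) ^ p.toReal := by
        rw [Real.mul_rpow (by norm_num) (norm_nonneg _), mul_comm (‖x‖ ^ p.toReal) 2]
        exact mul_le_mul_of_nonneg_right h2 (Real.rpow_nonneg (norm_nonneg _) _)

lemma Tfun_add (x y : C₀(ℕ, ℝ)) (j : ℕ) : Tfun (x + y) j = Tfun x j + Tfun y j := by
  unfold Tfun
  have h1 : ∀ i : ℕ, (if j < i then (1/2:ℝ)^(i+1) * (x + y) i else 0)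
      = (if j < i then (1/2:ℝ)^(i+1) * x i else 0) + (if j < i then (1/2:ℝ)^(i+1) * y i else 0) := by
    intro i
    by_cases h : j < i <;> simp [h, mul_add]
  rw [tsum_congr h1, Summable.tsum_add (summable_aux x j) (summable_aux y j)]
  simp [mul_add]
  ring

lemma Tfun_smul (c : ℝ) (x : C₀(ℕ, ℝ)) (j : ℕ) : Tfun (c • x) j = c * Tfun x j := by
  unfold Tfun
  have h1 : ∀ i : ℕ, (if j < i then (1/2:ℝ)^(i+1) * (c • x) i else 0)
      = c * (if j < i then (1/2:ℝ)^(i+1) * x i else 0) := by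
    intro i
    by_cases h : j < i <;> simp [h] <;> ring
  rw [tsum_congr h1, tsum_mul_left]
  simp
  ring

noncomputable def TL (hp : p ≠ ⊤) : C₀(ℕ, ℝ) →ₗ[ℝ] lp (fun _ : ℕ => ℝ) p where
  toFun x := ⟨Tfun x, Tfun_memℓp p hp x⟩
  map_add' x y := by
    apply Subtype.ext
    funext j
    exact Tfun_add x y j
  map_smul' c x := by
    apply Subtype.ext
    funext j
    exact Tfun_smul c x j

lemma TL_norm_le (hp : p ≠ ⊤) (x : C₀(ℕ, ℝ)) : ‖TL p hp x‖ ≤ 2 * ‖x‖ := by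
  apply lp.norm_le_of_tsum_le (toReal_pos' p hp) (by positivity)
  exact Tfun_tsum_le p hp x

noncomputable def Topr (hp : p ≠ ⊤) : C₀(ℕ, ℝ) →L[ℝ] lp (fun _ : ℕ => ℝ) p :=
  LinearMap.mkContinuous (TL p hp) 2 (TL_norm_le p hp)

lemma Topr_apply (hp : p ≠ ⊤) (x : C₀(ℕ, ℝ)) (j : ℕ) :
    (Topr p hp x : ∀ i : ℕ, ℝ) j = Tfun x j := rfl

end

noncomputable def sC (m : ℕ) : C₀(ℕ, ℝ) where
  toFun := fun i => if i < m then (1:ℝ) else 0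
  continuous_toFun := continuous_of_discreteTopology
  zero_at_infty' := by
    rw [cocompact_eq_cofinite, Nat.cofinite_eq_atTop]
    apply Filter.Tendsto.congr' (f₁ := fun _ => (0:ℝ)) ?_ tendsto_const_nhds
    filter_upwards [eventually_ge_atTop m] with i hi
    simp [Nat.not_lt.mpr hi]

lemma sC_apply (m i : ℕ) : sC m i = if i < m then (1:ℝ) else 0 := rfl

lemma sC_norm (m : ℕ) : ‖sC (m+1)‖ = 1 := by
  apply le_antisymm
  · rw [← ZeroAtInftyContinuousMap.norm_toBCF_eq_norm]
    apply (BoundedContinuousFunction.norm_le zero_le_one).2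
    intro i
    simp only [Real.norm_eq_abs]
    have : (sC (m+1)).toBCF i = sC (m+1) i := rfl
    rw [this, sC_apply]
    split <;> norm_num
  · have h := abs_apply_le (sC (m+1)) 0
    rw [sC_apply] at h
    simpa using h

noncomputable def ev0 : C₀(ℕ, ℝ) →L[ℝ] ℝ :=
  LinearMap.mkContinuous
    { toFun := fun x => x 0
      map_add' := fun x y => rfl
      map_smul' := fun c x => rfl }
    1 (fun x => by simpa [Real.norm_eq_abs] using abs_apply_le x 0)

lemma ev0_apply (x : C₀(ℕ, ℝ)) : ev0 x = x 0 := rfl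

lemma Tfun_sC (m j : ℕ) :
    Tfun (sC (m+1)) j = if j < m+1 then (1/2:ℝ)^(m+1) else 0 := by
  unfold Tfun
  by_cases hj : j < m+1
  · rw [if_pos hj]
    have hvan : ∀ i : ℕ, i ∉ Finset.Ico (j+1) (m+1) →
        (if j < i then (1/2:ℝ)^(i+1) * sC (m+1) i else 0) = 0 := by
      intro i hi
      rw [Finset.mem_Ico, not_and_or] at hi
      rcases hi with hi | hi
      · rw [if_neg (by omega)]
      · by_cases h : j < i
        · rw [if_pos h, sC_apply, if_neg (by omega), mul_zero]
        · rw [if_neg h]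
    rw [tsum_eq_sum hvan]
    have hsum : ∑ i ∈ Finset.Ico (j+1) (m+1), (if j < i then (1/2:ℝ)^(i+1) * sC (m+1) i else 0)
        = ∑ i ∈ Finset.Ico (j+1) (m+1), (1/2:ℝ)^i * (1/2) := by
      apply Finset.sum_congr rfl
      intro i hi
      rw [Finset.mem_Ico] at hi
      rw [if_pos (by omega), sC_apply, if_pos (by omega), mul_one, pow_succ]
    rw [hsum, ← Finset.sum_mul, geom_sum_Ico (by norm_num : (1/2:ℝ) ≠ 1) (by omega : j+1 ≤ m+1)]
    rw [sC_apply, if_pos hj]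
    field_simp
    ring
  · rw [if_neg hj]
    have hz : ∀ i : ℕ, (if j < i then (1/2:ℝ)^(i+1) * sC (m+1) i else 0) = 0 := by
      intro i
      by_cases h : j < i
      · rw [if_pos h, sC_apply, if_neg (by omega), mul_zero]
      · rw [if_neg h]
    rw [tsum_congr hz, tsum_zero, sC_apply, if_neg (by omega), mul_zero, sub_zero]

lemma norm_indicator_lp (p : ℝ≥0∞) [Fact (1 ≤ p)] (hq : 0 < p.toReal)
    (m : ℕ) (f : lp (fun _ : ℕ => ℝ) p)
    (hf : ∀ j : ℕ, (f : ∀ i : ℕ, ℝ) j = if j < m+1 then (1/2:ℝ)^(m+1) else 0) :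
    ‖f‖ = ((m:ℝ) + 1) ^ (1 / p.toReal) / 2 ^ (m+1) := by
  set c : ℝ := (1/2:ℝ)^(m+1) with hc
  have hcpos : 0 < c := by positivity
  rw [lp.norm_eq_tsum_rpow hq]
  have h1 : ∀ j : ℕ, ‖(f : ∀ i : ℕ, ℝ) j‖ ^ p.toReal = if j < m+1 then c ^ p.toReal else 0 := by
    intro j
    rw [hf j]
    by_cases h : j < m+1
    · rw [if_pos h, if_pos h, Real.norm_eq_abs, abs_of_pos hcpos]
    · rw [if_neg h, if_neg h, norm_zero, Real.zero_rpow hq.ne']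
  rw [tsum_congr h1]
  have h2 : ∑' j : ℕ, (if j < m+1 then c ^ p.toReal else 0) = ((m:ℝ)+1) * c ^ p.toReal := by
    rw [tsum_eq_sum (s := Finset.range (m+1)) (by
      intro i hi
      rw [Finset.mem_range] at hi
      rw [if_neg hi])]
    rw [Finset.sum_congr rfl (fun i hi => if_pos (Finset.mem_range.mp hi))]
    rw [Finset.sum_const, Finset.card_range, nsmul_eq_mul]
    push_cast
    ring
  rw [h2, Real.mul_rpow (by positivity) (Real.rpow_nonneg hcpos.le _)]
  have h3 : (c ^ p.toReal) ^ (1/p.toReal) = c := by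
    rw [← Real.rpow_mul hcpos.le, mul_one_div_cancel hq.ne', Real.rpow_one]
  rw [h3, hc, one_div_pow, mul_one_div]

lemma vlim (q : ℝ) (hq : 1 ≤ q) :
    Tendsto (fun m : ℕ => ((m:ℝ) + 1) ^ (1/q) / 2 ^ (m+1)) atTop (𝓝 0) := by
  have hq0 : 0 < q := lt_of_lt_of_le one_pos hq
  have hbig : Tendsto (fun n : ℕ => ((n:ℝ)) ^ (1:ℕ) * (1/2:ℝ) ^ n) atTop (𝓝 0) :=
    tendsto_pow_const_mul_const_pow_of_lt_one 1 (by norm_num) (by norm_num)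
  have hbig2 : Tendsto (fun m : ℕ => (((m+1:ℕ)):ℝ) ^ (1:ℕ) * (1/2:ℝ) ^ (m+1)) atTop (𝓝 0) :=
    hbig.comp (tendsto_add_atTop_nat 1)
  apply squeeze_zero (fun m => by positivity) ?_ hbig2
  intro m
  have h1 : ((m:ℝ) + 1) ^ (1/q) ≤ (m:ℝ) + 1 := by
    calc ((m:ℝ) + 1) ^ (1/q) ≤ ((m:ℝ) + 1) ^ (1:ℝ) := by
          apply Real.rpow_le_rpow_of_exponent_le (by linarith [Nat.cast_nonneg (α := ℝ) m])
          rw [div_le_one hq0]; exact hq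
      _ = (m:ℝ) + 1 := Real.rpow_one _
  calc ((m:ℝ) + 1) ^ (1/q) / 2 ^ (m+1) ≤ ((m:ℝ) + 1) / 2 ^ (m+1) := by
        apply div_le_div_of_nonneg_right h1 (by positivity) |>.trans_eq rfl
    _ = (((m+1:ℕ)):ℝ) ^ (1:ℕ) * (1/2:ℝ) ^ (m+1) := by
        push_cast
        rw [pow_one, one_div, inv_pow, div_eq_mul_inv]

lemma tail_rec (x : C₀(ℕ, ℝ)) (j : ℕ) :
    ∑' i : ℕ, (if j < i then (1/2:ℝ)^(i+1) * x i else 0)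
      = (1/2:ℝ)^(j+2) * x (j+1) + ∑' i : ℕ, (if j+1 < i then (1/2:ℝ)^(i+1) * x i else 0) := by
  have hpt : ∀ i : ℕ, (if j < i then (1/2:ℝ)^(i+1) * x i else 0)
      = (if i = j+1 then (1/2:ℝ)^(j+2) * x (j+1) else 0)
        + (if j+1 < i then (1/2:ℝ)^(i+1) * x i else 0) := by
    intro i
    rcases lt_trichotomy i (j+1) with h | h | h
    · rw [if_neg (by omega), if_neg (by omega), if_neg (by omega), add_zero]
    · subst h
      rw [if_pos (by omega), if_pos rfl, if_neg (by omega), add_zero]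
    · rw [if_pos (by omega), if_neg (by omega), if_pos h, zero_add]
  rw [tsum_congr hpt, Summable.tsum_add ?_ (summable_aux x (j+1)), tsum_ite_eq]
  exact summable_of_finite_support (Set.Finite.subset (Set.finite_singleton (j+1)) (by
    intro i hi
    simp only [Function.mem_support] at hi
    by_contra h
    simp only [Set.mem_singleton_iff] at h
    rw [if_neg h] at hi
    exact hi rfl))

lemma const_of_Tfun_zero (x : C₀(ℕ, ℝ)) (h : ∀ j, Tfun x j = 0) : x = 0 := by
  have hstep : ∀ j : ℕ, x j = x (j+1) := by
    intro j
    have h1 : (1/2:ℝ)^(j+1) * x j = ∑' i : ℕ, (if j < i then (1/2:ℝ)^(i+1) * x i else 0) := by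
      have := h j; unfold Tfun at this; linarith
    have h2 : (1/2:ℝ)^(j+2) * x (j+1)
        = ∑' i : ℕ, (if j+1 < i then (1/2:ℝ)^(i+1) * x i else 0) := by
      have := h (j+1); unfold Tfun at this
      rw [show j+1+1 = j+2 by omega] at this
      linarith
    have h3 := tail_rec x j
    rw [← h1, ← h2] at h3
    have h4 : (1/2:ℝ)^(j+1) * x j = (1/2:ℝ)^(j+1) * x (j+1) := by
      rw [h3, show j+2 = j+1+1 by omega, pow_succ]
      ring
    exact mul_left_cancel₀ (by positivity) h4
  have hconst : ∀ j : ℕ, x j = x 0 := by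
    intro j
    induction j with
    | zero => rfl
    | succ n ih => rw [← hstep n, ih]
  have hlim : Tendsto (fun j : ℕ => x j) atTop (𝓝 0) := by
    have := zero_at_infty x
    rwa [cocompact_eq_cofinite, Nat.cofinite_eq_atTop] at this
  have hlim2 : Tendsto (fun _ : ℕ => x 0) atTop (𝓝 0) := hlim.congr (fun j => hconst j)
  have hx0 : x 0 = 0 := tendsto_nhds_unique tendsto_const_nhds hlim2
  ext j
  rw [hconst j, hx0]
  rfl

end Stmt13Aux


theorem stmt13 (p : ℝ≥0∞) [Fact (1 ≤ p)] (hp : p ≠ ⊤) :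
    ∃ (T : C₀(ℕ, ℝ) →L[ℝ] lp (fun _ : ℕ => ℝ) p) (s : ℕ → C₀(ℕ, ℝ)),
      (∀ (x : C₀(ℕ, ℝ)) (j : ℕ),
        (T x : ∀ i : ℕ, ℝ) j =
          (1/2 : ℝ) ^ (j + 1) * x j - ∑' i : ℕ, if j < i then (1/2 : ℝ) ^ (i + 1) * x i else 0) ∧
      (∀ m i : ℕ, s m i = if i < m then (1 : ℝ) else 0) ∧
      (∀ m : ℕ, ‖T (s (m + 1))‖ = ((m + 1 : ℝ)) ^ (1 / p.toReal) / 2 ^ (m + 1)) ∧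
      minMod T = 0 ∧
      (∀ m : ℕ, ‖s (m + 1)‖ = 1) ∧
      Tendsto (fun m => ‖T (s (m + 1))‖) atTop (𝓝 (minMod T)) ∧
      ¬ WeaklyNull (fun m => s (m + 1)) ∧
      (∀ x : C₀(ℕ, ℝ), ‖x‖ = 1 → T x ≠ 0) ∧
      ¬ AttainsMinMod T := by

  classical
  have hq : 0 < p.toReal := Stmt13Aux.toReal_pos' p hp
  have hq1 : 1 ≤ p.toReal := Stmt13Aux.one_le_toReal' p hp
  have hTs : ∀ m : ℕ, ‖Stmt13Aux.Topr p hp (Stmt13Aux.sC (m+1))‖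
      = ((m:ℝ) + 1) ^ (1/p.toReal) / 2 ^ (m+1) := by
    intro m
    apply Stmt13Aux.norm_indicator_lp p hq m
    intro j
    rw [Stmt13Aux.Topr_apply, Stmt13Aux.Tfun_sC]
  have hT0 : ∀ x : C₀(ℕ, ℝ), ‖x‖ = 1 → Stmt13Aux.Topr p hp x ≠ 0 := by
    intro x hx h0
    have hz : ∀ j, Stmt13Aux.Tfun x j = 0 := by
      intro j
      have h1 := congrFun (congrArg (fun f : lp (fun _ : ℕ => ℝ) p => (f : ∀ i : ℕ, ℝ)) h0) j
      simpa [Stmt13Aux.Topr_apply] using h1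
    rw [Stmt13Aux.const_of_Tfun_zero x hz] at hx
    simp at hx
  have hv : Tendsto (fun m : ℕ => ‖Stmt13Aux.Topr p hp (Stmt13Aux.sC (m+1))‖) atTop (𝓝 0) :=
    (Stmt13Aux.vlim p.toReal hq1).congr (fun m => (hTs m).symm)
  have hmin : minMod (Stmt13Aux.Topr p hp) = 0 := by
    unfold minMod
    have hmem : ∀ m : ℕ, ‖Stmt13Aux.Topr p hp (Stmt13Aux.sC (m+1))‖ ∈
        {r : ℝ | ∃ x, ‖x‖ = 1 ∧ ‖Stmt13Aux.Topr p hp x‖ = r} :=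
      fun m => ⟨Stmt13Aux.sC (m+1), Stmt13Aux.sC_norm m, rfl⟩
    have hbdd : BddBelow {r : ℝ | ∃ x, ‖x‖ = 1 ∧ ‖Stmt13Aux.Topr p hp x‖ = r} := by
      refine ⟨0, ?_⟩
      rintro r ⟨x, -, rfl⟩
      exact norm_nonneg _
    apply le_antisymm
    · exact ge_of_tendsto' hv (fun m => csInf_le hbdd (hmem m))
    · apply le_csInf ⟨_, hmem 0⟩
      rintro r ⟨x, -, rfl⟩
      exact norm_nonneg _
  refine ⟨Stmt13Aux.Topr p hp, Stmt13Aux.sC, fun x j => rfl, fun m i => rfl, hTs, hmin,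
    fun m => Stmt13Aux.sC_norm m, ?_, ?_, hT0, ?_⟩
  · rw [hmin]
    exact hv
  · intro h
    have h1 := h Stmt13Aux.ev0
    have h2 : Tendsto (fun _ : ℕ => (1:ℝ)) atTop (𝓝 0) := by
      refine h1.congr fun m => ?_
      rw [Stmt13Aux.ev0_apply, Stmt13Aux.sC_apply, if_pos (Nat.succ_pos m)]
    exact one_ne_zero (tendsto_nhds_unique tendsto_const_nhds h2)
  · rintro ⟨x, hx1, hx2⟩
    rw [hmin] at hx2
    exact hT0 x hx1 (norm_eq_zero.mp hx2)
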